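/- If A(β) ≥ 0, where β is the largest real root of B, then β + (1 − c)θ² > θ² > 0 and the asymptotic coefficient recovery expression satisfies A(β)/(c·(β + (1 − c)θ²)·B′(β)) ≤ (c − σ̄⁴/θ⁴)/(c·(1 + σ̄²/θ²)), where B′(x) = cθ² ∑_ℓ p_ℓ/(x − σ_ℓ²)², with equality if and only if σ_1² = ⋯ = σ_L². (Homoscedastic noise maximizes the asymptotic coefficient recovery for a fixed average noise variance.) -/

import Mathlib

open Finset Filter Set Topology

/-- Core algebraic inequality: non-strict version. -/
lemma recov_core_le (c θ β E2 w : ℝ) (hc : 0 < c) (hθ : 0 < θ) (hβ : 0 < β)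
    (hw : 0 < w) (hwb : c*θ^2 ≤ β - w) (hE2 : 1 ≤ c^2*θ^4*E2)
    (hN : 0 ≤ (1-c)*θ^2 + 2*β - c*β^2*θ^2*E2) :
    ((1-c)*θ^2 + 2*β - c*β^2*θ^2*E2) / (c*(β+(1-c)*θ^2)*(c*θ^4*E2)) ≤
      (c - w^2/θ^4)/(c*(1+w/θ^2)) := by
  have hθ2 : 0 < θ^2 := by positivity
  have hE2pos : 0 < E2 := by nlinarith [show (0:ℝ) < c^2*θ^4 by positivity]
  have hb : 0 < β - c*θ^2 := by linarith
  have hd : 0 < β + (1-c)*θ^2 := by nlinarith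
  have hD : 0 < c*(β+(1-c)*θ^2)*(c*θ^4*E2) := by positivity
  have hpos1 : 0 ≤ (1-c)*θ^2 + 2*β := by nlinarith
  have hE2m1 : (0:ℝ) ≤ c^2*θ^4*E2 - 1 := by linarith
  have hRHS : (c - w^2/θ^4)/(c*(1+w/θ^2)) = (c*θ^4 - w^2)/(c*θ^2*(θ^2+w)) := by
    rw [div_eq_div_iff (by positivity) (by positivity)]
    field_simp
  rw [hRHS]
  have hK : 0 ≤ c*θ^4 - (β - c*θ^2)^2 := by
    nlinarith [mul_nonneg (sq_nonneg β) hE2m1, mul_nonneg hN (mul_pos hc hθ2).le]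
  have hM1 : ((1-c)*θ^2 + 2*β - c*β^2*θ^2*E2) / (c*(β+(1-c)*θ^2)*(c*θ^4*E2)) ≤
      (c*θ^4 - (β-c*θ^2)^2)/(c*θ^2*(θ^2+(β-c*θ^2))) := by
    rw [div_le_div_iff₀ hD (by positivity)]
    nlinarith [mul_nonneg (mul_nonneg (mul_nonneg (mul_pos hc hd).le hθ2.le) hpos1) hE2m1]
  have hM2 : (c*θ^4 - (β-c*θ^2)^2)/(c*θ^2*(θ^2+(β-c*θ^2))) ≤
      (c*θ^4 - w^2)/(c*θ^2*(θ^2+w)) := by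
    rw [div_le_div_iff₀ (by positivity) (by positivity)]
    nlinarith [mul_nonneg (mul_nonneg (mul_pos hc hθ2).le (by linarith : (0:ℝ) ≤ β - c*θ^2 - w))
      (by nlinarith : (0:ℝ) ≤ c*θ^4 + θ^2*(w+(β-c*θ^2)) + w*(β-c*θ^2))]
  exact hM1.trans hM2

/-- Core algebraic inequality: strict version when `c²θ⁴E2 > 1`. -/
lemma recov_core_lt (c θ β E2 w : ℝ) (hc : 0 < c) (hθ : 0 < θ) (hβ : 0 < β)
    (hw : 0 < w) (hwb : c*θ^2 ≤ β - w) (hE2 : 1 < c^2*θ^4*E2)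
    (hN : 0 ≤ (1-c)*θ^2 + 2*β - c*β^2*θ^2*E2) :
    ((1-c)*θ^2 + 2*β - c*β^2*θ^2*E2) / (c*(β+(1-c)*θ^2)*(c*θ^4*E2)) <
      (c - w^2/θ^4)/(c*(1+w/θ^2)) := by
  have hθ2 : 0 < θ^2 := by positivity
  have hE2pos : 0 < E2 := by nlinarith [show (0:ℝ) < c^2*θ^4 by positivity]
  have hb : 0 < β - c*θ^2 := by linarith
  have hd : 0 < β + (1-c)*θ^2 := by nlinarith
  have hD : 0 < c*(β+(1-c)*θ^2)*(c*θ^4*E2) := by positivity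
  have hpos1 : 0 < (1-c)*θ^2 + 2*β := by nlinarith [mul_pos (mul_pos (mul_pos hc (pow_pos hβ 2)) hθ2) hE2pos]
  have hE2m1 : (0:ℝ) < c^2*θ^4*E2 - 1 := by linarith
  have hRHS : (c - w^2/θ^4)/(c*(1+w/θ^2)) = (c*θ^4 - w^2)/(c*θ^2*(θ^2+w)) := by
    rw [div_eq_div_iff (by positivity) (by positivity)]
    field_simp
  rw [hRHS]
  have hK : 0 ≤ c*θ^4 - (β - c*θ^2)^2 := by
    nlinarith [mul_nonneg (sq_nonneg β) hE2m1.le, mul_nonneg hN (mul_pos hc hθ2).le]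
  have hM1 : ((1-c)*θ^2 + 2*β - c*β^2*θ^2*E2) / (c*(β+(1-c)*θ^2)*(c*θ^4*E2)) <
      (c*θ^4 - (β-c*θ^2)^2)/(c*θ^2*(θ^2+(β-c*θ^2))) := by
    rw [div_lt_div_iff₀ hD (by positivity)]
    nlinarith [mul_pos (mul_pos (mul_pos (mul_pos hc hd) hθ2) hpos1) hE2m1]
  have hM2 : (c*θ^4 - (β-c*θ^2)^2)/(c*θ^2*(θ^2+(β-c*θ^2))) ≤
      (c*θ^4 - w^2)/(c*θ^2*(θ^2+w)) := by
    rw [div_le_div_iff₀ (by positivity) (by positivity)]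
    nlinarith [mul_nonneg (mul_nonneg (mul_pos hc hθ2).le (by linarith : (0:ℝ) ≤ β - c*θ^2 - w))
      (by nlinarith : (0:ℝ) ≤ c*θ^4 + θ^2*(w+(β-c*θ^2)) + w*(β-c*θ^2))]
  exact hM1.trans_le hM2

/-- Core equality in the homoscedastic case. -/
lemma recov_core_eq (c θ β E2 w : ℝ) (hc : 0 < c) (hθ : 0 < θ)
    (hw : 0 < w) (hwb : w = β - c*θ^2) (hE2 : c^2*θ^4*E2 = 1) :
    ((1-c)*θ^2 + 2*β - c*β^2*θ^2*E2) / (c*(β+(1-c)*θ^2)*(c*θ^4*E2)) =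
      (c - w^2/θ^4)/(c*(1+w/θ^2)) := by
  have hθ2 : 0 < θ^2 := by positivity
  have hE2v : E2 = 1/(c^2*θ^4) := by
    field_simp
    linarith
  have hd : 0 < β + (1-c)*θ^2 := by nlinarith
  subst hE2v
  rw [div_eq_div_iff (by positivity) (by positivity)]
  subst hwb
  field_simp
  ring

/-- if `A(β) ≥ 0` then `β + (1 − c)θ² > θ² > 0` and the asymptotic
coefficient recovery satisfies
`A(β)/(c(β + (1 − c)θ²)B′(β)) ≤ (c − σ̄⁴/θ⁴)/(c(1 + σ̄²/θ²))`, with equality iff the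
noise is homoscedastic. -/
theorem coefficient_recovery_bound
    (c θ : ℝ) (hc : 0 < c) (hθ : 0 < θ)
    (L : ℕ) (hL : 1 ≤ L) (p σ : Fin L → ℝ)
    (hp : ∀ ℓ, 0 < p ℓ) (hpsum : ∑ ℓ, p ℓ = 1)
    (hσ : ∀ ℓ, 0 < σ ℓ)
    (σmax : ℝ) (hmaxle : ∀ ℓ, σ ℓ ≤ σmax) (hmaxmem : ∃ ℓ, σ ℓ = σmax)
    (A : ℝ → ℝ) (hA : ∀ x, A x = 1 - c * ∑ ℓ, p ℓ * (σ ℓ) ^ 2 / (x - σ ℓ) ^ 2)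
    (B : ℝ → ℝ) (hB : ∀ x, B x = 1 - c * θ ^ 2 * ∑ ℓ, p ℓ / (x - σ ℓ))
    (β : ℝ) (hβmem : σmax < β) (hβroot : B β = 0)
    (B' : ℝ → ℝ) (hB' : ∀ x, B' x = c * θ ^ 2 * ∑ ℓ, p ℓ / (x - σ ℓ) ^ 2)
    (hAβ : 0 ≤ A β) :
    θ ^ 2 < β + (1 - c) * θ ^ 2 ∧ (0:ℝ) < θ ^ 2 ∧
    A β / (c * (β + (1 - c) * θ ^ 2) * B' β) ≤
      (c - (∑ ℓ, p ℓ * σ ℓ) ^ 2 / θ ^ 4) / (c * (1 + (∑ ℓ, p ℓ * σ ℓ) / θ ^ 2)) ∧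
    (A β / (c * (β + (1 - c) * θ ^ 2) * B' β) =
      (c - (∑ ℓ, p ℓ * σ ℓ) ^ 2 / θ ^ 4) / (c * (1 + (∑ ℓ, p ℓ * σ ℓ) / θ ^ 2)) ↔
      (∀ ℓ ℓ' : Fin L, σ ℓ = σ ℓ')) := by
  have hθ2 : (0:ℝ) < θ ^ 2 := by positivity
  have hne : (Finset.univ : Finset (Fin L)).Nonempty := ⟨⟨0, hL⟩, mem_univ _⟩
  have hs : ∀ ℓ, 0 < β - σ ℓ := fun ℓ => by linarith [hmaxle ℓ]
  have hβpos : 0 < β := by obtain ⟨ℓ₀, h⟩ := hmaxmem; linarith [hσ ℓ₀, hmaxle ℓ₀]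
  set E1 := ∑ ℓ, p ℓ / (β - σ ℓ) with hE1def
  set E2 := ∑ ℓ, p ℓ / (β - σ ℓ) ^ 2 with hE2def
  set w := ∑ ℓ, p ℓ * σ ℓ with hwdef
  have hwpos : 0 < w := Finset.sum_pos (fun ℓ _ => mul_pos (hp ℓ) (hσ ℓ)) hne
  have hE1pos : 0 < E1 := Finset.sum_pos (fun ℓ _ => div_pos (hp ℓ) (hs ℓ)) hne
  have hE2pos : 0 < E2 := Finset.sum_pos (fun ℓ _ => div_pos (hp ℓ) (pow_pos (hs ℓ) 2)) hne
  have hE1eq : c * θ ^ 2 * E1 = 1 := by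
    have h := hβroot; rw [hB] at h; rw [hE1def]; linarith
  -- S1 ≥ γ fact :  c θ² ≤ β − w
  have hS1 : c * θ ^ 2 ≤ β - w := by
    have hnn : 0 ≤ ∑ ℓ, p ℓ * (β - σ ℓ - c * θ ^ 2) ^ 2 / (β - σ ℓ) :=
      Finset.sum_nonneg fun ℓ _ => div_nonneg (mul_nonneg (hp ℓ).le (sq_nonneg _)) (hs ℓ).le
    have e : ∀ ℓ ∈ Finset.univ, p ℓ * (β - σ ℓ - c * θ ^ 2) ^ 2 / (β - σ ℓ)
        = (β * p ℓ - p ℓ * σ ℓ) - 2 * (c * θ ^ 2) * p ℓ + (c * θ ^ 2) ^ 2 * (p ℓ / (β - σ ℓ)) := by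
      intro ℓ _
      have h := (hs ℓ).ne'
      field_simp
      ring
    rw [Finset.sum_congr rfl e, Finset.sum_add_distrib, Finset.sum_sub_distrib,
      Finset.sum_sub_distrib, ← Finset.mul_sum, ← Finset.mul_sum, ← Finset.mul_sum,
      hpsum, ← hwdef, ← hE1def] at hnn
    have h2 : (c * θ ^ 2) ^ 2 * E1 = c * θ ^ 2 := by
      linear_combination (c * θ ^ 2) * hE1eq
    linarith
  -- variance identity
  have hvar : ∑ ℓ, p ℓ * (1 / (β - σ ℓ) - E1) ^ 2 = E2 - E1 ^ 2 := by
    have e : ∀ ℓ ∈ Finset.univ, p ℓ * (1 / (β - σ ℓ) - E1) ^ 2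
        = p ℓ / (β - σ ℓ) ^ 2 - (2 * E1) * (p ℓ / (β - σ ℓ)) + E1 ^ 2 * p ℓ := by
      intro ℓ _
      have h := (hs ℓ).ne'
      field_simp
      ring
    rw [Finset.sum_congr rfl e, Finset.sum_add_distrib, Finset.sum_sub_distrib,
      ← Finset.mul_sum, ← Finset.mul_sum, hpsum, ← hE1def, ← hE2def]
    ring
  have hvarnn : 0 ≤ E2 - E1 ^ 2 := by
    rw [← hvar]
    exact Finset.sum_nonneg fun ℓ _ => mul_nonneg (hp ℓ).le (sq_nonneg _)
  have hE1sq : c ^ 2 * θ ^ 4 * E1 ^ 2 = 1 := by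
    linear_combination (c * θ ^ 2 * E1 + 1) * hE1eq
  have hc4 : (0:ℝ) < c ^ 2 * θ ^ 4 := by positivity
  have hCS : 1 ≤ c ^ 2 * θ ^ 4 * E2 := by nlinarith [mul_nonneg hc4.le hvarnn]
  -- A β in reduced form
  have hAval : A β = ((1-c)*θ^2 + 2*β - c*β^2*θ^2*E2) / θ ^ 2 := by
    rw [hA]
    have e : ∀ ℓ ∈ Finset.univ, p ℓ * σ ℓ ^ 2 / (β - σ ℓ) ^ 2
        = β ^ 2 * (p ℓ / (β - σ ℓ) ^ 2) - (2 * β) * (p ℓ / (β - σ ℓ)) + p ℓ := by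
      intro ℓ _
      have h := (hs ℓ).ne'
      field_simp
      ring
    rw [Finset.sum_congr rfl e, Finset.sum_add_distrib, Finset.sum_sub_distrib,
      ← Finset.mul_sum, ← Finset.mul_sum, hpsum, ← hE1def, ← hE2def]
    rw [eq_div_iff hθ2.ne']
    linear_combination (2 * β) * hE1eq
  -- hN from hAβ
  have hN : 0 ≤ (1-c)*θ^2 + 2*β - c*β^2*θ^2*E2 := by
    rw [hAval] at hAβ
    have := (div_nonneg_iff.mp hAβ)
    rcases this with ⟨h1, _⟩ | ⟨_, h2⟩
    · exact h1
    · linarith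
  -- LHS in reduced form
  have hLHS : A β / (c * (β + (1 - c) * θ ^ 2) * B' β)
      = ((1-c)*θ^2 + 2*β - c*β^2*θ^2*E2) / (c*(β+(1-c)*θ^2)*(c*θ^4*E2)) := by
    rw [hAval, hB', ← hE2def, div_div]
    congr 1
    ring
  refine ⟨by linarith, hθ2, ?_, ?_⟩
  · rw [hLHS]
    exact recov_core_le c θ β E2 w hc hθ hβpos hwpos hS1 hCS hN
  constructor
  · intro heq
    by_contra hcon
    push_neg at hcon
    obtain ⟨ℓ, ℓ', hσne⟩ := hcon
    have hvarne : ∑ i, p i * (1 / (β - σ i) - E1) ^ 2 ≠ 0 := by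
      intro h0
      have hall := (Finset.sum_eq_zero_iff_of_nonneg
        (fun i _ => mul_nonneg (hp i).le (sq_nonneg _))).1 h0
      have key : ∀ i : Fin L, σ i = β - 1 / E1 := by
        intro i
        have hi := hall i (mem_univ i)
        have h2 : (1 / (β - σ i) - E1) ^ 2 = 0 := by
          rcases mul_eq_zero.mp hi with h | h
          · exact absurd h (hp i).ne'
          · exact h
        have h3 : 1 / (β - σ i) = E1 := by
          have := pow_eq_zero_iff (n := 2) (by norm_num) |>.mp h2
          linarith
        have h4 : β - σ i = 1 / E1 := by
          rw [← one_div_one_div (β - σ i), h3]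
        linarith
      exact hσne ((key ℓ).trans (key ℓ').symm)
    have hvarpos : 0 < E2 - E1 ^ 2 := by
      rw [← hvar]
      exact lt_of_le_of_ne (hvar ▸ hvarnn) (Ne.symm hvarne)
    have hCS' : 1 < c ^ 2 * θ ^ 4 * E2 := by nlinarith [mul_pos hc4 hvarpos]
    have hlt := recov_core_lt c θ β E2 w hc hθ hβpos hwpos hS1 hCS' hN
    rw [hLHS] at heq
    linarith
  · intro hall
    have hℓ0 : (⟨0, hL⟩ : Fin L) = ⟨0, hL⟩ := rfl
    set v := σ ⟨0, hL⟩ with hvdef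
    have hsv : ∀ ℓ : Fin L, σ ℓ = v := fun ℓ => hall ℓ ⟨0, hL⟩
    have hE1v : E1 = 1 / (β - v) := by
      rw [hE1def, Finset.sum_congr rfl (fun ℓ _ => by rw [hsv ℓ]), ← Finset.sum_div, hpsum]
    have hsv0 : 0 < β - v := hs ⟨0, hL⟩
    have hβv : β - v = c * θ ^ 2 := by
      rw [hE1v] at hE1eq
      field_simp at hE1eq
      linarith
    have hE2v : c ^ 2 * θ ^ 4 * E2 = 1 := by
      have : E2 = 1 / (β - v) ^ 2 := by
        rw [hE2def, Finset.sum_congr rfl (fun ℓ _ => by rw [hsv ℓ]), ← Finset.sum_div, hpsum]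
      rw [this, hβv]
      field_simp
    have hwv : w = v := by
      rw [hwdef, Finset.sum_congr rfl (fun ℓ _ => by rw [hsv ℓ]), ← Finset.sum_mul, hpsum, one_mul]
    have hwb : w = β - c * θ ^ 2 := by rw [hwv]; linarith
    rw [hLHS]
    exact recov_core_eq c θ β E2 w hc hθ hwpos hwb hE2v
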